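/- Let H ∈ (0, 1/2), let T > 0, and fix ε ∈ (0, 1/2). Then there exists C > 0 such that for all 0 < u < s < t ≤ T, u^{1/2-H} (t-u)^{H-1/2} |t^{H-1/2} - s^{H-1/2}| ≤ C u^{1/2-H} s^{H-1+ε} (t-s)^{H-ε}. -/

import Mathlib

open MeasureTheory Real

lemma aux_bernoulli (s t q : ℝ) (hs : 0 < s) (hst : s < t) (hq0 : 0 < q) (hq1 : q < 1) :
    s ^ (-q) - t ^ (-q) ≤ q * s ^ (-q - 1) * (t - s) := by
  have ht : 0 < t := hs.trans hst
  set x : ℝ := (t - s) / s with hxdef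
  have hx0 : 0 < x := div_pos (by linarith) hs
  have h1 : (1 + x) ^ q ≤ 1 + q * x :=
    (rpow_one_add_lt_one_add_mul_self (by linarith) hx0.ne' hq0 hq1).le
  have hpow_pos : (0:ℝ) < (1 + x) ^ q := rpow_pos_of_pos (by linarith) q
  have h2 : 1 - q * x ≤ (1 + x) ^ (-q) := by
    rw [rpow_neg (by linarith : (0:ℝ) ≤ 1 + x), inv_eq_one_div, le_div_iff₀ hpow_pos]
    rcases le_or_gt (1 - q * x) 0 with h | h
    · have := mul_nonpos_of_nonpos_of_nonneg h hpow_pos.le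
      linarith
    · have h3 : (1 - q * x) * (1 + x) ^ q ≤ (1 - q * x) * (1 + q * x) :=
        mul_le_mul_of_nonneg_left h1 h.le
      nlinarith [mul_pos (mul_pos hq0 hx0) (mul_pos hq0 hx0)]
  have htx : t = s * (1 + x) := by
    rw [hxdef, mul_add, mul_one, mul_div_cancel₀ (t - s) hs.ne']
    ring
  have h3 : s ^ (-q) * (1 - q * x) ≤ t ^ (-q) := by
    rw [htx, mul_rpow hs.le (by linarith)]
    exact mul_le_mul_of_nonneg_left h2 (rpow_nonneg hs.le _)
  have h4 : s ^ (-q) * x = s ^ (-q - 1) * (t - s) := by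
    rw [show -q - 1 = -q + (-1) by ring, rpow_add hs, rpow_neg_one, hxdef]
    field_simp
  nlinarith [rpow_nonneg hs.le (-q)]

theorem stmt_5 (H T ε : ℝ) (hH : H ∈ Set.Ioo (0 : ℝ) (1/2)) (hT : 0 < T)
    (hε : ε ∈ Set.Ioo (0 : ℝ) (1/2)) :
    ∃ C : ℝ, 0 < C ∧ ∀ u s t : ℝ, 0 < u → u < s → s < t → t ≤ T →
      u ^ (1/2 - H) * (t - u) ^ (H - 1/2) * |t ^ (H - 1/2) - s ^ (H - 1/2)| ≤
        C * u ^ (1/2 - H) * s ^ (H - 1 + ε) * (t - s) ^ (H - ε) := by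
  obtain ⟨hH0, hH2⟩ := hH
  obtain ⟨hε0, hε2⟩ := hε
  refine ⟨1, one_pos, fun u s t hu hus hst htT => ?_⟩
  have hs : 0 < s := hu.trans hus
  have ht : 0 < t := hs.trans hst
  have hts : 0 < t - s := sub_pos.2 hst
  have htu : 0 < t - u := by linarith
  have hmono : t ^ (H - 1/2) ≤ s ^ (H - 1/2) :=
    rpow_le_rpow_of_nonpos hs hst.le (by linarith)
  have habs : |t ^ (H - 1/2) - s ^ (H - 1/2)| = s ^ (H - 1/2) - t ^ (H - 1/2) := by
    rw [abs_sub_comm, abs_of_nonneg (by linarith)]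
  have key : s ^ (H - 1/2) - t ^ (H - 1/2) ≤ s ^ (H - 1 + ε) * (t - s) ^ (1/2 - ε) := by
    rcases le_total (t - s) s with h | h
    · have hber := aux_bernoulli s t (1/2 - H) hs hst (by linarith) (by linarith)
      rw [show -(1/2 - H) = H - 1/2 by ring] at hber
      rw [show H - 1/2 - 1 = H - 3/2 by ring] at hber
      calc s ^ (H - 1/2) - t ^ (H - 1/2)
          ≤ (1/2 - H) * s ^ (H - 3/2) * (t - s) := hber
        _ = (1/2 - H) * s ^ (H - 3/2) * ((t - s) ^ ((1:ℝ)/2 + ε) * (t - s) ^ (1/2 - ε)) := by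
            rw [← rpow_add hts]
            norm_num
        _ ≤ 1 * s ^ (H - 3/2) * (s ^ ((1:ℝ)/2 + ε) * (t - s) ^ (1/2 - ε)) := by
            refine mul_le_mul ?_ ?_ (by positivity) (by positivity)
            · exact mul_le_mul_of_nonneg_right (by linarith) (rpow_nonneg hs.le _)
            · exact mul_le_mul_of_nonneg_right
                (rpow_le_rpow hts.le h (by linarith)) (rpow_nonneg hts.le _)
        _ = s ^ (H - 1 + ε) * (t - s) ^ (1/2 - ε) := by
            rw [one_mul, ← mul_assoc, ← rpow_add hs]
            ring_nf
    · calc s ^ (H - 1/2) - t ^ (H - 1/2)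
          ≤ s ^ (H - 1/2) := by
            have := rpow_nonneg ht.le (H - 1/2)
            linarith
        _ = s ^ (H - 1 + ε) * s ^ (1/2 - ε) := by
            rw [← rpow_add hs]; ring_nf
        _ ≤ s ^ (H - 1 + ε) * (t - s) ^ (1/2 - ε) :=
            mul_le_mul_of_nonneg_left (rpow_le_rpow hs.le h (by linarith))
              (rpow_nonneg hs.le _)
  have htu_le : (t - u) ^ (H - 1/2) ≤ (t - s) ^ (H - 1/2) :=
    rpow_le_rpow_of_nonpos hts (by linarith) (by linarith)
  have hsplit : (t - s) ^ (H - ε) = (t - s) ^ (H - 1/2) * (t - s) ^ (1/2 - ε) := by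
    rw [← rpow_add hts]; ring_nf
  rw [habs, one_mul, hsplit]
  calc u ^ (1/2 - H) * (t - u) ^ (H - 1/2) * (s ^ (H - 1/2) - t ^ (H - 1/2))
      ≤ u ^ (1/2 - H) * (t - s) ^ (H - 1/2) * (s ^ (H - 1 + ε) * (t - s) ^ (1/2 - ε)) := by
        refine mul_le_mul ?_ key (by linarith) (by positivity)
        exact mul_le_mul_of_nonneg_left htu_le (rpow_nonneg hu.le _)
    _ = u ^ (1/2 - H) * s ^ (H - 1 + ε) * ((t - s) ^ (H - 1/2) * (t - s) ^ (1/2 - ε)) := by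
        ring
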